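/- Let C ∈ ℝ^{p×n} have full column rank, B ∈ ℝ^{n×q}, G ∈ ℝ^{n×g}, and let K ∈ ℝ^{r×p} have row space equal to the left null space of CB (case b: D = 0). Then KCG has full column rank g if and only if rank([B, G]) = rank(B) + g. -/

import Mathlib

open Matrix Module

private lemma finrank_map_inj' {m n : ℕ} (f : (Fin m → ℝ) →ₗ[ℝ] (Fin n → ℝ))
    (hf : Function.Injective f) (S : Submodule ℝ (Fin m → ℝ)) :
    finrank ℝ (S.map f) = finrank ℝ S :=
  (Submodule.equivMapOfInjective f hf S).finrank_eq.symm

/-- Case (b) (`D = 0`): with `C` of full column rank and `K` whose row space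
equals the left null space of `CB`, `KCG` has full column rank `g` iff
`rank([B, G]) = rank B + g`. -/
theorem stmt_17 {p n g q r : ℕ}
    (C : Matrix (Fin p) (Fin n) ℝ) (B : Matrix (Fin n) (Fin q) ℝ)
    (G : Matrix (Fin n) (Fin g) ℝ) (hC : C.rank = n)
    (K : Matrix (Fin r) (Fin p) ℝ)
    (hspan : LinearMap.range K.vecMulLinear = LinearMap.ker (C * B).vecMulLinear) :
    (K * C * G).rank = g ↔
      (Matrix.fromCols B G).rank = B.rank + g := by
  classical
  let c := C.mulVecLin
  let k := K.mulVecLin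
  let U := LinearMap.range B.mulVecLin
  let W := LinearMap.range G.mulVecLin
  -- c is injective
  have hcrank : C.rank = finrank ℝ (LinearMap.range c) := rfl
  have hrn : finrank ℝ (LinearMap.range c) + finrank ℝ (LinearMap.ker c) = n := by
    have h := LinearMap.finrank_range_add_finrank_ker c
    simpa [Module.finrank_fintype_fun_eq_card] using h
  have hcinj : Function.Injective c := by
    rw [← LinearMap.ker_eq_bot]
    have h1 : finrank ℝ (LinearMap.ker c) = 0 := by omega
    exact Submodule.finrank_eq_zero.mp h1
  -- K * (C * B) = 0
  have hK0 : K * (C * B) = 0 := by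
    ext i j
    have hKi : K i ∈ LinearMap.range K.vecMulLinear :=
      ⟨Pi.single i 1, by simp; rfl⟩
    rw [hspan, LinearMap.mem_ker] at hKi
    have h2 := congrFun hKi j
    simpa [Matrix.mul_apply, Matrix.vecMul, dotProduct] using h2
  -- Col(CB) ≤ ker k
  have hle : LinearMap.range (C * B).mulVecLin ≤ LinearMap.ker k := by
    rintro x ⟨y, rfl⟩
    show K *ᵥ ((C * B) *ᵥ y) = 0
    rw [Matrix.mulVec_mulVec, hK0, Matrix.zero_mulVec]
  -- dimension count: finrank (ker k) = rank (C*B)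
  have ha1 : K.rank + finrank ℝ (LinearMap.ker k) = p := by
    have h := LinearMap.finrank_range_add_finrank_ker k
    rw [Module.finrank_fintype_fun_eq_card, Fintype.card_fin] at h
    exact h
  have ha2 : (C * B).rank + finrank ℝ (LinearMap.ker (C * B)ᵀ.mulVecLin) = p := by
    have h := LinearMap.finrank_range_add_finrank_ker (C * B)ᵀ.mulVecLin
    rw [Module.finrank_fintype_fun_eq_card, Fintype.card_fin] at h
    have h2 : (C * B)ᵀ.rank = (C * B).rank := Matrix.rank_transpose _
    have h3 : (C * B)ᵀ.rank = finrank ℝ (LinearMap.range (C * B)ᵀ.mulVecLin) := rfl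
    omega
  have ha3 : K.rank = finrank ℝ (LinearMap.ker (C * B)ᵀ.mulVecLin) := by
    rw [← Matrix.rank_transpose K]
    show finrank ℝ (LinearMap.range Kᵀ.mulVecLin) = _
    rw [Matrix.mulVecLin_transpose, hspan, ← Matrix.mulVecLin_transpose]
  have hkerk : LinearMap.ker k = LinearMap.range (C * B).mulVecLin := by
    refine (Submodule.eq_of_le_of_finrank_eq hle ?_).symm
    have h4 : (C * B).rank = finrank ℝ (LinearMap.range (C * B).mulVecLin) := rfl
    omega
  have hkermap : LinearMap.ker k = U.map c := by
    rw [hkerk]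
    show LinearMap.range (C * B).mulVecLin = _
    rw [Matrix.mulVecLin_mul, LinearMap.range_comp]
  -- rank (K*C*G) as finrank of image
  have hKCG : (K * C * G).rank = finrank ℝ ((W.map c).map k) := by
    show finrank ℝ (LinearMap.range (K * C * G).mulVecLin) = _
    rw [Matrix.mulVecLin_mul, Matrix.mulVecLin_mul, LinearMap.range_comp,
      Submodule.map_comp]
  -- counting: finrank (map k (map c W)) + finrank (map c W ⊓ ker k) = finrank (map c W)
  have hcount : finrank ℝ ((W.map c).map k)
      + finrank ℝ (W.map c ⊓ LinearMap.ker k : Submodule ℝ (Fin p → ℝ))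
      = finrank ℝ (W.map c) := by
    have h := LinearMap.finrank_range_add_finrank_ker (k.domRestrict (W.map c))
    rw [LinearMap.range_domRestrict, LinearMap.ker_domRestrict] at h
    have h2 := Submodule.finrank_map_subtype_eq (W.map c)
      (Submodule.comap (W.map c).subtype (LinearMap.ker k))
    rw [Submodule.map_comap_subtype] at h2
    omega
  -- transfer through injective c
  have hWU : W.map c ⊓ LinearMap.ker k = (W ⊓ U).map c := by
    rw [hkermap, Submodule.map_inf c hcinj]
  have hmain : (K * C * G).rank + finrank ℝ (W ⊓ U : Submodule ℝ (Fin n → ℝ))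
      = G.rank := by
    rw [hKCG]
    have hG : G.rank = finrank ℝ W := rfl
    rw [hWU, finrank_map_inj' c hcinj, finrank_map_inj' c hcinj] at hcount
    omega
  -- rank of fromColumns
  have hcols : LinearMap.range (Matrix.fromCols B G).mulVecLin = U ⊔ W := by
    apply le_antisymm
    · rintro x ⟨v, rfl⟩
      have hv : (Matrix.fromCols B G).mulVecLin v
          = B.mulVecLin (v ∘ Sum.inl) + G.mulVecLin (v ∘ Sum.inr) := by
        have hv2 : v = Sum.elim (v ∘ Sum.inl) (v ∘ Sum.inr) := by
          funext x; cases x <;> rfl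
        rw [Matrix.mulVecLin_apply, hv2, Matrix.fromCols_mulVec_sumElim]
        rfl
      rw [hv]
      exact Submodule.add_mem_sup ⟨_, rfl⟩ ⟨_, rfl⟩
    · rw [sup_le_iff]
      constructor
      · rintro x ⟨v, rfl⟩
        exact ⟨Sum.elim v 0, by
          simp [Matrix.mulVecLin_apply, Matrix.fromCols_mulVec_sumElim]⟩
      · rintro x ⟨v, rfl⟩
        exact ⟨Sum.elim 0 v, by
          simp [Matrix.mulVecLin_apply, Matrix.fromCols_mulVec_sumElim]⟩
  have hBG : (Matrix.fromCols B G).rank = finrank ℝ (U ⊔ W : Submodule ℝ (Fin n → ℝ)) := by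
    show finrank ℝ (LinearMap.range (Matrix.fromCols B G).mulVecLin) = _
    rw [hcols]
  have hdim := Submodule.finrank_sup_add_finrank_inf_eq U W
  have hBr : B.rank = finrank ℝ U := rfl
  have hGr : G.rank = finrank ℝ W := rfl
  have hGle : G.rank ≤ g := Matrix.rank_le_width G
  have hcomm : finrank ℝ (W ⊓ U : Submodule ℝ (Fin n → ℝ))
      = finrank ℝ (U ⊓ W : Submodule ℝ (Fin n → ℝ)) := by rw [inf_comm]
  omega
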